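/- Let α, β be irrational with α ± β ∉ ℤ, with convergent denominators q_n and t_m and partial quotients a_n (for α). Then there are only finitely many pairs of indices (n, m) with q_n = t_{m+1}, q_{n+2} = t_{m+2}, and a_{n+2} = 1. -/

import Mathlib

/-- Uniqueness of remainder in division. -/
private lemma div_unique' {c c' B r r' : ℤ} (hr0 : 0 ≤ r) (hr : r < B) (hr'0 : 0 ≤ r') (hr' : r' < B)
    (h : c * B + r = c' * B + r') : r = r' := by
  have h1 : r % B = r := Int.emod_eq_of_lt hr0 hr
  have h2 : r' % B = r' := Int.emod_eq_of_lt hr'0 hr'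
  have h3 := congrArg (· % B) h
  simp only [add_comm (_ * B), Int.add_mul_emod_self_right] at h3
  simpa [h1, h2] using h3

section CF

variable (u a : ℕ → ℤ)

private lemma cf_pos (h0 : u 0 = 1) (h1 : 1 ≤ u 1)
    (hrec : ∀ k, u (k + 2) = a (k + 2) * u (k + 1) + u k) (ha : ∀ r, 1 ≤ a (r + 1)) :
    ∀ k, 1 ≤ u k := by
  have key : ∀ k, 1 ≤ u k ∧ 1 ≤ u (k + 1) := by
    intro k
    induction k with
    | zero => exact ⟨by omega, h1⟩
    | succ n ih =>
      refine ⟨ih.2, ?_⟩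
      have h := hrec n
      have := ha (n + 1)
      nlinarith [ih.1, ih.2]
  exact fun k => (key k).1

private lemma cf_add_le (h0 : u 0 = 1) (h1 : 1 ≤ u 1)
    (hrec : ∀ k, u (k + 2) = a (k + 2) * u (k + 1) + u k) (ha : ∀ r, 1 ≤ a (r + 1)) :
    ∀ k, u (k + 1) + u k ≤ u (k + 2) := by
  intro k
  have h := hrec k
  have h2 := ha (k + 1)
  have h3 := cf_pos u a h0 h1 hrec ha (k + 1)
  nlinarith

private lemma cf_mono (h0 : u 0 = 1) (h1 : 1 ≤ u 1)
    (hrec : ∀ k, u (k + 2) = a (k + 2) * u (k + 1) + u k) (ha : ∀ r, 1 ≤ a (r + 1)) :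
    ∀ k, u k ≤ u (k + 1) := by
  intro k
  cases k with
  | zero => show u 0 ≤ u 1; omega
  | succ n =>
    show u (n + 1) ≤ u (n + 2)
    have := cf_add_le u a h0 h1 hrec ha n
    have := cf_pos u a h0 h1 hrec ha n
    omega

private lemma cf_two_le (h0 : u 0 = 1) (h1 : 1 ≤ u 1)
    (hrec : ∀ k, u (k + 2) = a (k + 2) * u (k + 1) + u k) (ha : ∀ r, 1 ≤ a (r + 1)) :
    ∀ k, 2 ≤ u (k + 2) := by
  intro k
  have := cf_add_le u a h0 h1 hrec ha k
  have := cf_pos u a h0 h1 hrec ha k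
  have := cf_pos u a h0 h1 hrec ha (k + 1)
  omega

private lemma cf_consec (h0 : u 0 = 1) (h1 : 1 ≤ u 1)
    (hrec : ∀ k, u (k + 2) = a (k + 2) * u (k + 1) + u k) (ha : ∀ r, 1 ≤ a (r + 1)) :
    ∀ k, u k = u (k + 1) → u k = 1 := by
  intro k hk
  cases k with
  | zero => omega
  | succ n =>
    have hk' : u (n + 1) = u (n + 2) := hk
    have := cf_add_le u a h0 h1 hrec ha n
    have := cf_pos u a h0 h1 hrec ha n
    omega

private lemma cf_growth (h0 : u 0 = 1) (h1 : 1 ≤ u 1)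
    (hrec : ∀ k, u (k + 2) = a (k + 2) * u (k + 1) + u k) (ha : ∀ r, 1 ≤ a (r + 1)) :
    ∀ k : ℕ, (k : ℤ) ≤ u (k + 1) := by
  intro k
  induction k with
  | zero => show ((0 : ℕ) : ℤ) ≤ u 1; push_cast; omega
  | succ n ih =>
    show ((n + 1 : ℕ) : ℤ) ≤ u (n + 2)
    have := cf_add_le u a h0 h1 hrec ha n
    have := cf_pos u a h0 h1 hrec ha n
    push_cast at ih ⊢
    omega

end CF

section Step

variable (a b q t : ℕ → ℤ)
variable (hq0 : q 0 = 1) (hq1 : 1 ≤ q 1)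
  (hqrec : ∀ k, q (k + 2) = a (k + 2) * q (k + 1) + q k) (ha : ∀ r, 1 ≤ a (r + 1))
  (ht0 : t 0 = 1) (ht1 : 1 ≤ t 1)
  (htrec : ∀ k, t (k + 2) = b (k + 2) * t (k + 1) + t k) (hb : ∀ r, 1 ≤ b (r + 1))

include hq0 hq1 hqrec ha ht0 ht1 htrec hb in
/-- One step of the backwards descent: aligned values propagate downwards. -/
private lemma cf_step (i k : ℕ) (h2 : t (i + 2) = q (k + 2)) (h1 : t (i + 1) = q (k + 1)) :
    t i = q k := by
  have tpos := cf_pos t b ht0 ht1 htrec hb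
  have qpos := cf_pos q a hq0 hq1 hqrec ha
  have tmono := cf_mono t b ht0 ht1 htrec hb i
  have qmono := cf_mono q a hq0 hq1 hqrec ha k
  by_cases hB : t (i + 1) = 1
  · have hq' : q (k + 1) = 1 := by omega
    have := tpos i
    have := qpos k
    omega
  · have hB2 : 2 ≤ t (i + 1) := by have := tpos (i + 1); omega
    have htl : t i < t (i + 1) := by
      rcases lt_or_eq_of_le tmono with h | h
      · exact h
      · have := cf_consec t b ht0 ht1 htrec hb i h; omega
    have hql : q k < t (i + 1) := by
      rw [h1]
      rcases lt_or_eq_of_le qmono with h | h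
      · exact h
      · have := cf_consec q a hq0 hq1 hqrec ha k h
        rw [h1] at hB2
        omega
    have e1 := htrec i
    have e2 := hqrec k
    rw [← h1] at e2
    have hkey : b (i + 2) * t (i + 1) + t i = a (k + 2) * t (i + 1) + q k := by
      rw [← e1, h2, e2]
    exact div_unique' (by have := tpos i; omega) htl (by have := qpos k; omega) hql hkey

include hq0 hq1 hqrec ha ht0 ht1 htrec hb in
/-- Iterated backwards descent. -/
private lemma cf_descent :
    ∀ j i k, t (i + j + 1) = q (k + j + 1) → t (i + j) = q (k + j) →
      t i = q k ∧ t (i + 1) = q (k + 1) := by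
  intro j
  induction j with
  | zero => intro i k h1 h0; exact ⟨h0, h1⟩
  | succ n ih =>
    intro i k h1 h0
    rw [show i + (n + 1) + 1 = (i + 1) + n + 1 from by omega,
        show k + (n + 1) + 1 = (k + 1) + n + 1 from by omega] at h1
    rw [show i + (n + 1) = (i + 1) + n from by omega,
        show k + (n + 1) = (k + 1) + n from by omega] at h0
    have hh := ih (i + 1) (k + 1) h1 h0
    exact ⟨cf_step a b q t hq0 hq1 hqrec ha ht0 ht1 htrec hb i k hh.2 hh.1, hh.1⟩

include hq0 hq1 hqrec ha ht0 ht1 htrec hb in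
/-- The initial alignment step, using `a (n+4) = 1`. -/
private lemma cf_base (n m : ℕ) (hnm1 : q (n + 2) = t (m + 1)) (hnm2 : q (n + 4) = t (m + 2))
    (ha2 : a (n + 4) = 1) : t m = q (n + 1) := by
  have tpos := cf_pos t b ht0 ht1 htrec hb
  have qpos := cf_pos q a hq0 hq1 hqrec ha
  have e4 := hqrec (n + 2)
  have e3 := hqrec (n + 1)
  have et := htrec m
  have hkey : (a (n + 3) + 1) * t (m + 1) + q (n + 1) = b (m + 2) * t (m + 1) + t m := by
    have h5 : q (n + 4) = (a (n + 3) + 1) * q (n + 2) + q (n + 1) := by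
      rw [e4, ha2, e3]; ring
    rw [hnm1] at h5
    rw [← h5, hnm2, et]
  have hB2 : 2 ≤ t (m + 1) := by
    rw [← hnm1]; exact cf_two_le q a hq0 hq1 hqrec ha n
  have hlt1 : q (n + 1) < t (m + 1) := by
    rw [← hnm1]
    have := cf_add_le q a hq0 hq1 hqrec ha n
    have := qpos n
    omega
  have hlt2 : t m < t (m + 1) := by
    rcases lt_or_eq_of_le (cf_mono t b ht0 ht1 htrec hb m) with h | h
    · exact h
    · have := cf_consec t b ht0 ht1 htrec hb m h; omega
  exact (div_unique' (by have := qpos (n + 1); omega) hlt1 (by have := tpos m; omega) hlt2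
    hkey).symm

end Step

/-- Lemma 2: for irrationals `α, β` with `α ± β ∉ ℤ`, with convergent denominators
`q` and `t` respectively, only finitely many pairs `(n, m)` satisfy
`q n = t (m+1)`, `q (n+2) = t (m+2)` and `a (n+2) = 1`. -/
theorem stmt_6 (α β : ℝ) (hα : Irrational α) (hβ : Irrational β)
    (hsum : ∀ k : ℤ, α + β ≠ (k : ℝ)) (hdiff : ∀ k : ℤ, α - β ≠ (k : ℝ))
    (tlα : ℕ → ℝ) (aα : ℕ → ℤ) (q : ℕ → ℤ)
    (htlα0 : tlα 0 = α)
    (htlα : ∀ r, tlα (r + 1) = (tlα r - (⌊tlα r⌋ : ℝ))⁻¹)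
    (haα : ∀ r, aα r = ⌊tlα r⌋)
    (hq0 : q 0 = 1) (hq1 : q 1 = aα 1)
    (hqrec : ∀ k, q (k + 2) = aα (k + 2) * q (k + 1) + q k)
    (tlβ : ℕ → ℝ) (aβ : ℕ → ℤ) (t : ℕ → ℤ)
    (htlβ0 : tlβ 0 = β)
    (htlβ : ∀ r, tlβ (r + 1) = (tlβ r - (⌊tlβ r⌋ : ℝ))⁻¹)
    (haβ : ∀ r, aβ r = ⌊tlβ r⌋)
    (ht0 : t 0 = 1) (ht1 : t 1 = aβ 1)
    (htrec : ∀ k, t (k + 2) = aβ (k + 2) * t (k + 1) + t k) :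
    {p : ℕ × ℕ | q p.1 = t (p.2 + 1) ∧ q (p.1 + 2) = t (p.2 + 2) ∧ aα (p.1 + 2) = 1}.Finite := by
  -- positivity of partial quotients
  have tail_pos : ∀ (x : ℝ) (tl : ℕ → ℝ), Irrational x → tl 0 = x →
      (∀ r, tl (r + 1) = (tl r - (⌊tl r⌋ : ℝ))⁻¹) → ∀ r, 1 ≤ ⌊tl (r + 1)⌋ := by
    intro x tl hx h0 hrec
    have hirr : ∀ r, Irrational (tl r) := by
      intro r
      induction r with
      | zero => rwa [h0]
      | succ n ih =>
        rw [hrec n]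
        exact (Irrational.sub_intCast ih _).inv
    intro r
    rw [Int.le_floor, hrec r]
    push_cast
    have hlt1 : tl r - (⌊tl r⌋ : ℝ) < 1 := by
      have := Int.sub_one_lt_floor (tl r)
      linarith
    have hpos : 0 < tl r - (⌊tl r⌋ : ℝ) := by
      have h1 : (⌊tl r⌋ : ℝ) ≤ tl r := Int.floor_le _
      rcases lt_or_eq_of_le h1 with h | h
      · linarith
      · exact absurd h.symm ((hirr r).ne_int ⌊tl r⌋)
    nlinarith [mul_inv_cancel₀ (ne_of_gt hpos), inv_pos.mpr hpos]
  have ha : ∀ r, 1 ≤ aα (r + 1) := by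
    intro r; rw [haα]; exact tail_pos α tlα hα htlα0 htlα r
  have hb : ∀ r, 1 ≤ aβ (r + 1) := by
    intro r; rw [haβ]; exact tail_pos β tlβ hβ htlβ0 htlβ r
  have hq1' : 1 ≤ q 1 := by rw [hq1]; exact ha 0
  have ht1' : 1 ≤ t 1 := by rw [ht1]; exact hb 0
  have qpos := cf_pos q aα hq0 hq1' hqrec ha
  have tpos := cf_pos t aβ ht0 ht1' htrec hb
  have qadd := cf_add_le q aα hq0 hq1' hqrec ha
  have ttwo := cf_two_le t aβ ht0 ht1' htrec hb
  have qtwo := cf_two_le q aα hq0 hq1' hqrec ha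
  have tgrow := cf_growth t aβ ht0 ht1' htrec hb
  have base := cf_base aα aβ q t hq0 hq1' hqrec ha ht0 ht1' htrec hb
  have descent := cf_descent aα aβ q t hq0 hq1' hqrec ha ht0 ht1' htrec hb
  set S : Set (ℕ × ℕ) :=
    {p : ℕ × ℕ | q p.1 = t (p.2 + 1) ∧ q (p.1 + 2) = t (p.2 + 2) ∧ aα (p.1 + 2) = 1} with hSdef
  -- Claim A and B : bounds on the index difference for pairs with first index ≥ 2
  have hAB : ∀ n m : ℕ, (n + 2, m) ∈ S → n ≤ m ∧ m ≤ n + 2 := by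
    rintro n m ⟨h1, h2, h3⟩
    simp only at h1 h2 h3
    have htop : t (m + 1) = q (n + 2) := h1.symm
    have hbase : t m = q (n + 1) := base n m h1 h2 h3
    constructor
    · by_contra hcon
      push_neg at hcon
      obtain ⟨e, he⟩ : ∃ e, n = m + 1 + e := ⟨n - (m + 1), by omega⟩
      have hd := descent m 0 (e + 2)
        (by rw [show 0 + m + 1 = m + 1 from by omega, show e + 2 + m + 1 = n + 2 from by omega]
            exact htop)
        (by rw [show 0 + m = m from by omega, show e + 2 + m = n + 1 from by omega]
            exact hbase)
      have := hd.1
      have := qtwo e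
      omega
    · by_contra hcon
      push_neg at hcon
      obtain ⟨e, he⟩ : ∃ e, m = n + 3 + e := ⟨m - (n + 3), by omega⟩
      have hd := descent (n + 1) (e + 2) 0
        (by rw [show e + 2 + (n + 1) + 1 = m + 1 from by omega,
                show 0 + (n + 1) + 1 = n + 2 from by omega]
            exact htop)
        (by rw [show e + 2 + (n + 1) = m from by omega, show 0 + (n + 1) = n + 1 from by omega]
            exact hbase)
      have := hd.1
      have := ttwo e
      omega
  -- Claim C : two distinct pairs with first index ≥ 2 cannot have the same difference
  have hC : ∀ n m n' m' : ℕ, (n + 2, m) ∈ S → (n' + 2, m') ∈ S →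
      n + m' = n' + m → m < m' → False := by
    rintro n m n' m' ⟨h1, h2, h3⟩ ⟨h1', h2', h3'⟩ hd hlt
    simp only at h1 h2 h3 h1' h2' h3'
    obtain ⟨j, hj⟩ : ∃ j, m' = m + 1 + j := ⟨m' - (m + 1), by omega⟩
    have hn' : n' = n + 1 + j := by omega
    have htop' : t (m' + 1) = q (n' + 2) := h1'.symm
    have hbase' : t m' = q (n' + 1) := base n' m' h1' h2' h3'
    have hdsc := descent j (m + 1) (n + 2)
      (by rw [show m + 1 + j + 1 = m' + 1 from by omega,
              show n + 2 + j + 1 = n' + 2 from by omega]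
          exact htop')
      (by rw [show m + 1 + j = m' from by omega, show n + 2 + j = n' + 1 from by omega]
          exact hbase')
    -- hdsc.2 : t (m + 2) = q (n + 3)
    have hkey : t (m + 2) = q (n + 3) := hdsc.2
    have e4 : q (n + 4) = aα (n + 4) * q (n + 3) + q (n + 2) := hqrec (n + 2)
    have h3' : aα (n + 4) = 1 := h3
    rw [h3', one_mul] at e4
    -- q (n + 4) = q (n + 3) + q (n + 2), but also q (n + 4) = t (m + 2) = q (n + 3)
    have := qpos (n + 2)
    have h2' : q (n + 4) = t (m + 2) := h2
    omega
  -- split S into the small part and the part with first index ≥ 2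
  have hsub : S ⊆ (Set.Iic 1 ×ˢ Set.Iic (q 1).toNat) ∪ (S ∩ {p : ℕ × ℕ | 2 ≤ p.1}) := by
    intro p hp
    by_cases h2 : 2 ≤ p.1
    · exact Or.inr ⟨hp, h2⟩
    · left
      obtain ⟨hp1, hp2, hp3⟩ := hp
      refine ⟨by simp only [Set.mem_Iic]; omega, ?_⟩
      have hg : (p.2 : ℤ) ≤ t (p.2 + 1) := tgrow p.2
      have hle : q p.1 ≤ q 1 := by
        interval_cases h : p.1
        · rw [hq0]; omega
        · exact le_refl _
      simp only [Set.mem_Iic]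
      omega
  refine Set.Finite.subset (Set.Finite.union (Set.Finite.prod (Set.finite_Iic _)
    (Set.finite_Iic _)) ?_) hsub
  -- the big part injects into Fin 3 via the index difference
  haveI : Finite ↥(S ∩ {p : ℕ × ℕ | 2 ≤ p.1}) := by
    apply Finite.of_injective (fun p : ↥(S ∩ {p : ℕ × ℕ | 2 ≤ p.1}) =>
      (⟨p.1.1 - p.1.2, by
        have hpS : p.1 ∈ S := p.2.1
        have hp2 : 2 ≤ p.1.1 := p.2.2
        obtain ⟨n, hn⟩ : ∃ n, p.1.1 = n + 2 := ⟨p.1.1 - 2, by omega⟩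
        have hbd := hAB n p.1.2 (by rw [← hn]; exact hpS)
        omega⟩ : Fin 3))
    rintro ⟨⟨n₁, m₁⟩, hp₁, hg₁⟩ ⟨⟨n₂, m₂⟩, hp₂, hg₂⟩ hf
    simp only [Fin.mk.injEq] at hf
    simp only [Set.mem_setOf_eq] at hg₁ hg₂
    obtain ⟨k₁, hk₁⟩ : ∃ k, n₁ = k + 2 := ⟨n₁ - 2, by omega⟩
    obtain ⟨k₂, hk₂⟩ : ∃ k, n₂ = k + 2 := ⟨n₂ - 2, by omega⟩
    subst hk₁ hk₂
    have hb₁ := hAB k₁ m₁ hp₁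
    have hb₂ := hAB k₂ m₂ hp₂
    have hdd : k₁ + m₂ = k₂ + m₁ := by omega
    rcases lt_trichotomy m₁ m₂ with h | h | h
    · exact absurd (hC k₁ m₁ k₂ m₂ hp₁ hp₂ hdd h) not_false
    · have : k₁ = k₂ := by omega
      simp [this, h]
    · exact absurd (hC k₂ m₂ k₁ m₁ hp₂ hp₁ (by omega) h) not_false
  exact Set.toFinite _
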